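/- arXiv:2504.16861 — 2 statements merged into one kernel-verified Lean document; each statement's English description precedes it below -/
import Mathlib

section
/- Define ω(ξ) := sqrt((γ|ξ|/2)·(|ξ|² − (β/2)|ξ| + β − 1)) for γ > 0 and 0 < β < 4(2+√3). Then ω(5) = √5 · ω(3) for all admissible β. -/
/-- The Kelvin–Helmholtz dispersion relation
`ω(ξ) = sqrt((γ|ξ|/2)(|ξ|² − (β/2)|ξ| + β − 1))` satisfies the exact resonance
identity `ω(5) = √5 · ω(3)` for all admissible `β`. -/
theorem stmt5 (γ β : ℝ) (hγ : 0 < γ) (hβ0 : 0 < β) (hβ1 : β < 4 * (2 + Real.sqrt 3)) :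
    Real.sqrt ((γ * |(5 : ℝ)| / 2) * (|(5 : ℝ)| ^ 2 - (β / 2) * |(5 : ℝ)| + β - 1))
      = Real.sqrt 5 *
        Real.sqrt ((γ * |(3 : ℝ)| / 2) * (|(3 : ℝ)| ^ 2 - (β / 2) * |(3 : ℝ)| + β - 1)) := by
  rw [← Real.sqrt_mul (by norm_num : (5:ℝ) ≥ 0)]
  congr 1
  rw [abs_of_nonneg (by norm_num : (5:ℝ) ≥ 0), abs_of_nonneg (by norm_num : (3:ℝ) ≥ 0)]
  ring
end

section
/- For 0 < β < 4(2+√3), x_0 ∈ (0,1] and y ∈ [0,1], the quantity x_0²(x_0² − y²)β + 2y²(y² + 2x_0²) is strictly positive unless x_0 = y = 0. -/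
/-- Positivity of the denominator `x₀²(x₀² − y²)β + 2y²(y² + 2x₀²)` appearing in the
`β`-derivative of the rescaled Kelvin–Helmholtz frequency, for `0 < β < 4(2+√3)`,
`x₀ ∈ (0,1]`, `y ∈ [0,1]`. -/
theorem stmt12 (β x0 y : ℝ) (hβ0 : 0 < β) (hβ1 : β < 4 * (2 + Real.sqrt 3))
    (hx0 : 0 < x0) (hx1 : x0 ≤ 1) (hy0 : 0 ≤ y) (hy1 : y ≤ 1) :
    0 < x0 ^ 2 * (x0 ^ 2 - y ^ 2) * β + 2 * y ^ 2 * (y ^ 2 + 2 * x0 ^ 2) := by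
  have hs : Real.sqrt 3 ^ 2 = 3 := Real.sq_sqrt (by norm_num)
  have hs0 : (0:ℝ) ≤ Real.sqrt 3 := Real.sqrt_nonneg 3
  have hx2 : 0 < x0 ^ 2 := by positivity
  rcases le_or_gt (y ^ 2) (x0 ^ 2) with h | h
  · rcases eq_or_lt_of_le hy0 with hey | hey
    · have : y = 0 := hey.symm
      subst this
      nlinarith [mul_pos (mul_pos hx2 hx2) hβ0]
    · have hy2 : 0 < y ^ 2 := by positivity
      have h1 : 0 ≤ x0 ^ 2 * (x0 ^ 2 - y ^ 2) * β :=
        mul_nonneg (mul_nonneg hx2.le (by linarith)) hβ0.le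
      nlinarith [mul_pos hy2 (by nlinarith : (0:ℝ) < y ^ 2 + 2 * x0 ^ 2)]
  · have hP : 0 < x0 ^ 2 * (y ^ 2 - x0 ^ 2) := mul_pos hx2 (by linarith)
    have h1 : β * (x0 ^ 2 * (y ^ 2 - x0 ^ 2)) < 4 * (2 + Real.sqrt 3) * (x0 ^ 2 * (y ^ 2 - x0 ^ 2)) :=
      mul_lt_mul_of_pos_right hβ1 hP
    have key : 2 * y ^ 2 * (y ^ 2 + 2 * x0 ^ 2) - 4 * (2 + Real.sqrt 3) * (x0 ^ 2 * (y ^ 2 - x0 ^ 2))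
        = 2 * (y ^ 2 - (1 + Real.sqrt 3) * x0 ^ 2) ^ 2 := by
      linear_combination (-2 * x0 ^ 4) * hs
    nlinarith [sq_nonneg (y ^ 2 - (1 + Real.sqrt 3) * x0 ^ 2)]
end
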